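/- Let X be a complex Banach space, ω a real number, M > 0, and let F : (ω,∞) → ℝ → X be given on (ω,∞). Suppose there exists f ∈ L¹_loc([0,∞); X) with ‖f(t)‖ ≤ M·e^{ωt} almost everywhere and F(λ) = ∫₀^∞ e^{−λt} f(t) dt for λ > ω. Then F admits an analytic extension to the half-plane {z ∈ ℂ : Re z > ω}, this extension satisfies F⁽ᵛ⁾(z) = ∫₀^∞ e^{−zt}(−t)^v f(t) dt and ‖F⁽ᵛ⁾(z)‖ ≤ M·v!/(Re z − ω)^{v+1} for all z with Re z > ω and all v ∈ ℕ. -/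

import Mathlib

open MeasureTheory Set

lemma aux_integrable (v : ℕ) {r : ℝ} (hr : 0 < r) :
    IntegrableOn (fun t : ℝ => t ^ v * Real.exp (-(r * t))) (Ioi 0) := by
  have h := integrableOn_rpow_mul_exp_neg_mul_rpow (p := 1) (s := (v : ℝ)) (b := r)
    (by linarith [Nat.cast_nonneg (α := ℝ) v]) one_pos hr
  refine h.congr_fun (fun x hx => ?_) measurableSet_Ioi
  beta_reduce
  rw [Real.rpow_one, Real.rpow_natCast, neg_mul]

lemma aux_value (v : ℕ) {r : ℝ} (hr : 0 < r) :
    ∫ t in Ioi (0:ℝ), t ^ v * Real.exp (-(r * t)) = (v.factorial : ℝ) / r ^ (v + 1) := by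
  have h := Real.integral_rpow_mul_exp_neg_mul_Ioi (a := (v : ℝ) + 1) (by positivity) hr
  rw [show ((v:ℝ) + 1 - 1) = (v:ℝ) by ring] at h
  have h2 : ∫ t in Ioi (0:ℝ), t ^ v * Real.exp (-(r * t))
      = ∫ t in Ioi (0:ℝ), t ^ ((v:ℝ)) * Real.exp (-(r * t)) := by
    refine setIntegral_congr_fun measurableSet_Ioi (fun x hx => ?_)
    rw [Real.rpow_natCast]
  have h3 : Real.Gamma ((v:ℝ) + 1) = (v.factorial : ℝ) := by
    exact_mod_cast Real.Gamma_nat_eq_factorial v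
  rw [h2, h, h3, show ((v:ℝ) + 1) = ((v + 1 : ℕ) : ℝ) by push_cast; ring,
    Real.rpow_natCast, div_pow, one_pow, one_div, inv_mul_eq_div]

/-- If `F : (ω,∞) → X` is the Laplace transform of a locally Bochner
integrable `f` with `‖f(t)‖ ≤ M e^{ωt}` a.e., then `F` extends analytically to the
half-plane `{Re z > ω}` and the extension satisfies
`F⁽ᵛ⁾(z) = ∫₀^∞ e^{-zt}(-t)^v f(t) dt` and the Widder-type estimates there. -/
theorem stmt_9 {X : Type*} [NormedAddCommGroup X] [NormedSpace ℂ X] [CompleteSpace X]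
    (ω M : ℝ) (hM : 0 < M) (F : ℝ → X) (f : ℝ → X)
    (hloc : LocallyIntegrableOn f (Ici 0) volume)
    (hb : ∀ᵐ t ∂(volume.restrict (Ici (0 : ℝ))), ‖f t‖ ≤ M * Real.exp (ω * t))
    (hrep : ∀ l : ℝ, ω < l → F l = ∫ t in Ioi (0 : ℝ), Real.exp (-l * t) • f t) :
    ∃ G : ℂ → X,
      (∀ l : ℝ, ω < l → G (l : ℂ) = F l) ∧
      DifferentiableOn ℂ G {z : ℂ | ω < z.re} ∧
      (∀ (v : ℕ) (z : ℂ), ω < z.re →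
        iteratedDeriv v G z
          = ∫ t in Ioi (0 : ℝ), (Complex.exp (-z * (t : ℂ)) * (-(t : ℂ)) ^ v) • f t) ∧
      (∀ (v : ℕ) (z : ℂ), ω < z.re →
        ‖iteratedDeriv v G z‖ ≤ M * (Nat.factorial v : ℝ) / (z.re - ω) ^ (v + 1)) := by
  -- the integrand and the candidate derivatives
  set g : ℕ → ℂ → ℝ → X :=
    fun v z t => (Complex.exp (-z * (t:ℂ)) * (-(t:ℂ)) ^ v) • f t with hgdef
  set G : ℕ → ℂ → X := fun v z => ∫ t in Ioi (0:ℝ), g v z t with hGdef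
  have hmeasf : AEStronglyMeasurable f (volume.restrict (Ioi (0:ℝ))) :=
    hloc.aestronglyMeasurable.mono_measure
      (Measure.restrict_mono Ioi_subset_Ici_self le_rfl)
  have hb' : ∀ᵐ t ∂(volume.restrict (Ioi (0:ℝ))), ‖f t‖ ≤ M * Real.exp (ω * t) :=
    ae_restrict_of_ae_restrict_of_subset Ioi_subset_Ici_self hb
  -- measurability of the integrands
  have hgmeas : ∀ (v : ℕ) (z : ℂ),
      AEStronglyMeasurable (g v z) (volume.restrict (Ioi (0:ℝ))) := by
    intro v z
    exact (((Complex.continuous_exp.comp (by fun_prop)).mul (by fun_prop)).aestronglyMeasurable).smul hmeasf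
  -- pointwise norm bound
  have hptwise : ∀ (v : ℕ) (w : ℂ) (t : ℝ), 0 ≤ t → ‖f t‖ ≤ M * Real.exp (ω * t) →
      ‖g v w t‖ ≤ M * (t ^ v * Real.exp (-((w.re - ω) * t))) := by
    intro v w t ht hf
    have h1 : ‖g v w t‖ = Real.exp (-(w.re * t)) * t ^ v * ‖f t‖ := by
      rw [hgdef]
      simp only [norm_smul, norm_mul, norm_pow, Complex.norm_exp, map_pow,
        norm_neg, Complex.norm_real, Real.norm_eq_abs, abs_of_nonneg ht]
      congr 3
      simp [Complex.mul_re]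
    rw [h1]
    calc Real.exp (-(w.re * t)) * t ^ v * ‖f t‖
        ≤ Real.exp (-(w.re * t)) * t ^ v * (M * Real.exp (ω * t)) := by
          apply mul_le_mul_of_nonneg_left hf (by positivity)
      _ = M * (t ^ v * Real.exp (-((w.re - ω) * t))) := by
          rw [show -((w.re - ω) * t) = -(w.re * t) + ω * t by ring, Real.exp_add]; ring
  -- integrability
  have hinteg : ∀ (v : ℕ) (z : ℂ), ω < z.re → IntegrableOn (g v z) (Ioi 0) := by
    intro v z hz
    refine Integrable.mono' ((aux_integrable v (sub_pos.mpr hz)).const_mul M) (hgmeas v z) ?_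
    filter_upwards [hb', ae_restrict_mem measurableSet_Ioi] with t hf ht
    exact hptwise v z t (le_of_lt ht) hf
  -- the key differentiation step
  have key : ∀ (v : ℕ) (z : ℂ), ω < z.re → HasDerivAt (G v) (G (v+1) z) z := by
    intro v z hz
    set δ : ℝ := (z.re - ω) / 2 with hδ
    have hδpos : 0 < δ := by simp [hδ]; linarith
    have h := hasDerivAt_integral_of_dominated_loc_of_deriv_le (s := Metric.ball z δ)
      (F := fun w t => g v w t) (F' := fun w t => g (v+1) w t)
      (bound := fun t => M * (t ^ (v+1) * Real.exp (-(δ * t))))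
      (μ := volume.restrict (Ioi (0:ℝ))) (x₀ := z)
      (Metric.ball_mem_nhds z hδpos)
      (Filter.Eventually.of_forall fun w => hgmeas v w)
      (hinteg v z hz)
      (hgmeas (v+1) z)
      ?_ ((aux_integrable (v+1) hδpos).const_mul M) ?_
    · exact h.2
    · -- bound on the ball
      filter_upwards [hb', ae_restrict_mem measurableSet_Ioi] with t hf ht w hw
      have hwre : δ ≤ w.re - ω := by
        have := Complex.abs_re_le_norm (w - z)
        rw [Complex.sub_re] at this
        have hd : ‖w - z‖ < δ := by
          rwa [Metric.mem_ball, Complex.dist_eq] at hw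
        have : |w.re - z.re| < δ := lt_of_le_of_lt this hd
        have := abs_lt.mp this
        simp [hδ] at *
        linarith
      calc ‖g (v+1) w t‖ ≤ M * (t ^ (v+1) * Real.exp (-((w.re - ω) * t))) :=
            hptwise (v+1) w t (le_of_lt ht) hf
        _ ≤ M * (t ^ (v+1) * Real.exp (-(δ * t))) := by
            apply mul_le_mul_of_nonneg_left _ (le_of_lt hM)
            apply mul_le_mul_of_nonneg_left _ (pow_nonneg (le_of_lt ht) _)
            apply Real.exp_le_exp.mpr
            have := mul_le_mul_of_nonneg_right hwre (le_of_lt ht)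
            linarith
    · -- differentiability of the integrand
      filter_upwards [ae_restrict_mem measurableSet_Ioi] with t ht w hw
      have h1 : HasDerivAt (fun w : ℂ => -w * (t:ℂ)) (-(t:ℂ)) w := by
        simpa using ((hasDerivAt_id w).neg.mul_const (t:ℂ))
      have h2 := (h1.cexp).mul_const ((-(t:ℂ)) ^ v)
      have h3 : Complex.exp (-w * (t:ℂ)) * (-(t:ℂ)) * (-(t:ℂ)) ^ v
          = Complex.exp (-w * (t:ℂ)) * (-(t:ℂ)) ^ (v+1) := by ring
      rw [h3] at h2
      exact h2.smul_const (f t)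
  -- G 0 agrees with F on the reals
  have hG0 : ∀ l : ℝ, ω < l → G 0 (l : ℂ) = F l := by
    intro l hl
    rw [hrep l hl, hGdef]
    refine setIntegral_congr_fun measurableSet_Ioi (fun t ht => ?_)
    have : (-(l:ℂ) * (t:ℂ)) = ((-l * t : ℝ) : ℂ) := by push_cast; ring
    rw [hgdef]
    simp only [pow_zero, mul_one, this, ← Complex.ofReal_exp, Complex.coe_smul]
  -- iterated derivatives
  have hopen : IsOpen {z : ℂ | ω < z.re} := isOpen_lt continuous_const Complex.continuous_re
  have iterEq : ∀ (v : ℕ) (z : ℂ), ω < z.re → iteratedDeriv v (G 0) z = G v z := by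
    intro v
    induction v with
    | zero => intro z hz; simp [iteratedDeriv_zero]
    | succ v ih =>
      intro z hz
      rw [iteratedDeriv_succ]
      have hev : iteratedDeriv v (G 0) =ᶠ[nhds z] G v :=
        Filter.eventuallyEq_of_mem (hopen.mem_nhds hz) (fun w hw => ih w hw)
      rw [hev.deriv_eq, (key v z hz).deriv]
  -- the bound
  have hbound : ∀ (v : ℕ) (z : ℂ), ω < z.re →
      ‖G v z‖ ≤ M * (Nat.factorial v : ℝ) / (z.re - ω) ^ (v + 1) := by
    intro v z hz
    have hr : 0 < z.re - ω := sub_pos.mpr hz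
    have h1 : ‖G v z‖ ≤ ∫ t in Ioi (0:ℝ), M * (t ^ v * Real.exp (-((z.re - ω) * t))) := by
      refine norm_integral_le_of_norm_le ((aux_integrable v hr).const_mul M) ?_
      filter_upwards [hb', ae_restrict_mem measurableSet_Ioi] with t hf ht
      exact hptwise v z t (le_of_lt ht) hf
    calc ‖G v z‖ ≤ ∫ t in Ioi (0:ℝ), M * (t ^ v * Real.exp (-((z.re - ω) * t))) := h1
      _ = M * ((v.factorial : ℝ) / (z.re - ω) ^ (v + 1)) := by
          rw [integral_const_mul, aux_value v hr]
      _ = M * (Nat.factorial v : ℝ) / (z.re - ω) ^ (v + 1) := by ring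
  exact ⟨G 0, hG0,
    fun z hz => ((key 0 z hz).differentiableAt).differentiableWithinAt,
    fun v z hz => iterEq v z hz,
    fun v z hz => (iterEq v z hz) ▸ hbound v z hz⟩
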